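/- Let A be a (Γ,λ)-commutative algebra such that A⁰ is a local ring, and let M be a free graded A-module of rank n admitting bases of degrees μ = (μ₁,…,μₙ) and ν = (ν₁,…,νₙ) in Γⁿ. Then, up to a permutation of the entries of ν, one has νᵢ − μᵢ ∈ Γ_{A^×} for all i, where Γ_{A^×} = {γ ∈ Γ : A^γ ∩ A^× ≠ ∅}. -/

import Mathlib

open Finset DirectSum

section AuxLemmasForDegrees


lemma aux_isUnit_add {R : Type*} [Ring R] [IsLocalRing R] {a b : R}
    (h : IsUnit (a + b)) : IsUnit a ∨ IsUnit b := by
  obtain ⟨u, hu⟩ := h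
  have h1 : (↑u⁻¹ : R) * a + (↑u⁻¹ : R) * b = 1 := by
    rw [← mul_add, ← hu, Units.inv_mul]
  rcases IsLocalRing.isUnit_or_isUnit_of_add_one h1 with h2 | h2
  · left
    have : a = (u : R) * ((↑u⁻¹ : R) * a) := by
      rw [← mul_assoc, Units.mul_inv, one_mul]
    rw [this]; exact u.isUnit.mul h2
  · right
    have : b = (u : R) * ((↑u⁻¹ : R) * b) := by
      rw [← mul_assoc, Units.mul_inv, one_mul]
    rw [this]; exact u.isUnit.mul h2

lemma aux_sum_isUnit {R : Type*} [Ring R] [IsLocalRing R] {ι : Type*} {s : Finset ι} {f : ι → R}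
    (h : IsUnit (∑ i ∈ s, f i)) : ∃ i ∈ s, IsUnit (f i) := by
  induction s using Finset.cons_induction with
  | empty => rw [Finset.sum_empty] at h; exact absurd h not_isUnit_zero
  | cons a s ha ih =>
    rw [Finset.sum_cons] at h
    rcases aux_isUnit_add h with h1 | h2
    · exact ⟨a, Finset.mem_cons_self a s, h1⟩
    · obtain ⟨i, hi, hu⟩ := ih h2
      exact ⟨i, Finset.mem_cons_of_mem hi, hu⟩

variable {Γ : Type*} [AddCommGroup Γ] [DecidableEq Γ] {𝕂 : Type*} [Field 𝕂]
  {A : Type*} [Ring A] [Algebra 𝕂 A]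

lemma aux_mem_of_eq {𝒜 : Γ → Submodule 𝕂 A} {a : A} {γ δ : Γ} (h : a ∈ 𝒜 γ) (hγ : γ = δ) :
    a ∈ 𝒜 δ := hγ ▸ h

lemma key_matrix (𝒜 : Γ → Submodule 𝕂 A) [GradedAlgebra 𝒜] (hloc : IsLocalRing ↥(𝒜 0)) :
    ∀ (n : ℕ) (μ ν : Fin n → Γ) (C D : Fin n → Fin n → A),
    (∀ i j, C i j ∈ 𝒜 (ν j - μ i)) → (∀ j i, D j i ∈ 𝒜 (μ i - ν j)) →
    (∀ j k, ∑ i, C i k * D j i = if j = k then 1 else 0) →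
    (∀ i k, ∑ j, D j i * C k j = if i = k then 1 else 0) →
    ∃ π : Equiv.Perm (Fin n), ∀ i, ∃ a : A, a ∈ 𝒜 (ν (π i) - μ i) ∧ IsUnit a := by
  haveI := hloc
  intro n
  induction n with
  | zero => exact fun _ _ _ _ _ _ _ _ => ⟨1, fun i => i.elim0⟩
  | succ n ih =>
    intro μ ν C D hC hD hR1 hR2
    -- find the pivot row r
    have hsum : ∑ i, C i 0 * D 0 i = 1 := by simpa using hR1 0 0
    have hmem0 : ∀ i, C i 0 * D 0 i ∈ 𝒜 0 := fun i =>
      aux_mem_of_eq (SetLike.mul_mem_graded (hC i 0) (hD 0 i)) (by abel)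
    have coeSum : ∀ (g : Fin (n+1) → ↥(𝒜 0)), ((∑ i, g i : ↥(𝒜 0)) : A) = ∑ i, (g i : A) := by
      intro g
      induction (Finset.univ : Finset (Fin (n+1))) using Finset.cons_induction with
      | empty => simp
      | cons a s ha ihs => rw [Finset.sum_cons, Finset.sum_cons, ← ihs]; rfl
    set t : Fin (n+1) → ↥(𝒜 0) := fun i => ⟨C i 0 * D 0 i, hmem0 i⟩ with ht
    have hsum' : (∑ i, t i) = (1 : ↥(𝒜 0)) := by
      apply Subtype.ext
      rw [coeSum]
      exact hsum
    obtain ⟨r, -, hr⟩ := aux_sum_isUnit (hsum' ▸ isUnit_one)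
    obtain ⟨u, hu⟩ := hr
    set w : A := ((↑u⁻¹ : ↥(𝒜 0)) : A) with hwdef
    have hw : w ∈ 𝒜 0 := (↑u⁻¹ : ↥(𝒜 0)).2
    have e1 : (↑u * ↑u⁻¹ : ↥(𝒜 0)) = 1 := u.mul_inv
    rw [hu] at e1
    have h1 : (C r 0 * D 0 r) * w = 1 := congrArg Subtype.val e1
    set b : A := D 0 r * w with hbdef
    have hab : C r 0 * b = 1 := by rw [hbdef, ← mul_assoc]; exact h1
    have hb : b ∈ 𝒜 (μ r - ν 0) :=
      aux_mem_of_eq (SetLike.mul_mem_graded (hD 0 r) hw) (add_zero _)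
    have he : b * C r 0 ∈ 𝒜 0 :=
      aux_mem_of_eq (SetLike.mul_mem_graded hb (hC r 0)) (by abel)
    have hee : (b * C r 0) * (b * C r 0) = b * C r 0 := by
      rw [mul_assoc, ← mul_assoc (C r 0), hab, one_mul]
    have hba : b * C r 0 = 1 := by
      set eh : ↥(𝒜 0) := ⟨b * C r 0, he⟩ with hehdef
      have hid : eh * eh = eh := Subtype.ext hee
      have hsum1 : eh + (1 - eh) = 1 := by abel
      rcases IsLocalRing.isUnit_or_isUnit_of_add_one hsum1 with hu1 | hu2
      · obtain ⟨v, hv⟩ := hu1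
        have heq : eh = 1 := by
          calc eh = 1 * eh := (one_mul _).symm
          _ = (↑v⁻¹ * ↑v) * eh := by rw [v.inv_mul]
          _ = ↑v⁻¹ * (eh * eh) := by rw [hv, mul_assoc]
          _ = ↑v⁻¹ * eh := by rw [hid]
          _ = ↑v⁻¹ * ↑v := by rw [hv]
          _ = 1 := v.inv_mul
        exact congrArg Subtype.val heq
      · obtain ⟨v, hv⟩ := hu2
        have hz : (1 - eh) * eh = 0 := by rw [sub_mul, one_mul, hid, sub_self]
        have h0 : eh = 0 := by
          calc eh = 1 * eh := (one_mul _).symm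
          _ = (↑v⁻¹ * ↑v) * eh := by rw [v.inv_mul]
          _ = ↑v⁻¹ * ((1 - eh) * eh) := by rw [hv, mul_assoc]
          _ = 0 := by rw [hz, mul_zero]
        have hba0 : b * C r 0 = 0 := congrArg Subtype.val h0
        have ha0 : C r 0 = 0 := by
          have hx : C r 0 = C r 0 * (b * C r 0) := by rw [← mul_assoc, hab, one_mul]
          rw [hx, hba0, mul_zero]
        have h10 : (1 : A) = 0 := by rw [← hab, ha0, zero_mul]
        exact absurd (Subtype.ext h10 : (1 : ↥(𝒜 0)) = 0) one_ne_zero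
    have haU : IsUnit (C r 0) := ⟨⟨C r 0, b, hab, hba⟩, rfl⟩
    -- Schur complement
    set s : Fin n → Fin (n+1) := r.succAbove with hsdef
    set C' : Fin n → Fin n → A :=
      fun i j => C (s i) j.succ - C r j.succ * b * C (s i) 0 with hC'def
    set D' : Fin n → Fin n → A := fun j i => D j.succ (s i) with hD'def
    have hC' : ∀ i j, C' i j ∈ 𝒜 (ν j.succ - μ (s i)) := fun i j =>
      sub_mem (hC _ _)
        (aux_mem_of_eq
          (SetLike.mul_mem_graded (SetLike.mul_mem_graded (hC r j.succ) hb) (hC (s i) 0))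
          (by abel))
    have hD' : ∀ j i, D' j i ∈ 𝒜 (μ (s i) - ν j.succ) := fun j i => hD _ _
    have key1 : ∀ (j k : Fin (n+1)), ∑ i : Fin n, C (s i) k * D j (s i)
        = (if j = k then 1 else 0) - C r k * D j r := by
      intro j k
      have h := hR1 j k
      rw [Fin.sum_univ_succAbove (fun i => C i k * D j i) r] at h
      exact eq_sub_of_add_eq' h
    have key2 : ∀ (i k : Fin (n+1)), ∑ j : Fin n, D j.succ i * C k j.succ
        = (if i = k then 1 else 0) - D 0 i * C k 0 := by
      intro i k
      have h := hR2 i k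
      rw [Fin.sum_univ_succ (fun j => D j i * C k j)] at h
      exact eq_sub_of_add_eq' h
    have hR1' : ∀ j k : Fin n, ∑ i, C' i k * D' j i = if j = k then 1 else 0 := by
      intro j k
      have expand : ∀ i : Fin n, C' i k * D' j i
          = C (s i) k.succ * D j.succ (s i)
            - C r k.succ * b * (C (s i) 0 * D j.succ (s i)) := by
        intro i
        rw [hC'def]
        dsimp only
        rw [sub_mul, mul_assoc (C r k.succ * b)]
      rw [Finset.sum_congr rfl (fun i _ => expand i), Finset.sum_sub_distrib, ← Finset.mul_sum,
        key1 j.succ k.succ, key1 j.succ 0,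
        if_neg (Fin.succ_ne_zero j)]
      have hjk : (if j.succ = k.succ then (1:A) else 0) = if j = k then 1 else 0 := by
        simp [Fin.succ_inj]
      rw [hjk, zero_sub, mul_neg]
      have hmid : C r k.succ * b * (C r 0 * D j.succ r) = C r k.succ * D j.succ r := by
        rw [mul_assoc (C r k.succ) b, ← mul_assoc b, hba, one_mul]
      rw [hmid]
      abel
    have hR2' : ∀ i k : Fin n, ∑ j, D' j i * C' k j = if i = k then 1 else 0 := by
      intro i k
      have expand : ∀ j : Fin n, D' j i * C' k j
          = D j.succ (s i) * C (s k) j.succ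
            - (D j.succ (s i) * C r j.succ) * (b * C (s k) 0) := by
        intro j
        rw [hC'def, hD'def]
        dsimp only
        rw [mul_sub, mul_assoc (C r j.succ) b, ← mul_assoc (D j.succ (s i))]
      rw [Finset.sum_congr rfl (fun j _ => expand j), Finset.sum_sub_distrib, ← Finset.sum_mul,
        key2 (s i) (s k), key2 (s i) r,
        if_neg (Fin.succAbove_ne r i)]
      have hik : (if s i = s k then (1:A) else 0) = if i = k then 1 else 0 := by
        exact if_congr (Fin.succAbove_right_injective (p := r)).eq_iff rfl rfl
      rw [hik, zero_sub, neg_mul]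
      have hmid : D 0 (s i) * C r 0 * (b * C (s k) 0) = D 0 (s i) * C (s k) 0 := by
        rw [mul_assoc (D 0 (s i)), ← mul_assoc (C r 0), hab, one_mul]
      rw [hmid]
      abel
    obtain ⟨π', hπ'⟩ := ih (fun i => μ (s i)) (fun j => ν j.succ) C' D' hC' hD' hR1' hR2'
    set π : Equiv.Perm (Fin (n+1)) :=
      (finSuccEquiv' r).trans ((Equiv.optionCongr π').trans (finSuccEquiv' 0).symm) with hπdef
    refine ⟨π, fun i => ?_⟩
    rcases eq_or_ne i r with rfl | hir
    · have hπr : π i = 0 := by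
        rw [hπdef]
        simp
      rw [hπr]
      exact ⟨C i 0, hC i 0, haU⟩
    · obtain ⟨k, hk⟩ := Fin.exists_succAbove_eq hir
      have hπk : π i = (π' k).succ := by
        rw [hπdef, ← hk]
        simp [Fin.zero_succAbove]
      obtain ⟨x, hx, hxu⟩ := hπ' k
      refine ⟨x, ?_, hxu⟩
      rw [hπk, ← hk]
      exact hx

end AuxLemmasForDegrees


/-- Let A be a (Γ,λ)-commutative algebra with A⁰ local, and M a free graded
A-module of rank n admitting homogeneous bases of degrees μ and ν ∈ Γⁿ.
Then, up to a permutation of the entries of ν, one has νᵢ − μᵢ ∈ Γ_{A^×}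
for all i, where Γ_{A^×} = {γ : A^γ contains an invertible element}. -/
theorem degrees_of_bases_differ_by_unit_degrees
    {Γ : Type*} [AddCommGroup Γ] [DecidableEq Γ] {𝕂 : Type*} [Field 𝕂]
    {A : Type*} [Ring A] [Algebra 𝕂 A]
    (𝒜 : Γ → Submodule 𝕂 A) [GradedAlgebra 𝒜] (lam : Γ → Γ → 𝕂ˣ)
    (hC1 : ∀ x y, lam x y * lam y x = 1)
    (hC2 : ∀ x y z, lam (x + y) z = lam x z * lam y z)
    (hC3 : ∀ z x y, lam z (x + y) = lam z x * lam z y)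
    (hcomm : ∀ (α β : Γ) (a b : A), a ∈ 𝒜 α → b ∈ 𝒜 β →
      a * b = (lam α β : 𝕂) • (b * a))
    (hloc : IsLocalRing ↥(𝒜 0))
    {M : Type*} [AddCommGroup M] [Module A M] [Module 𝕂 M]
    [IsScalarTower 𝕂 A M]
    (ℳ : Γ → Submodule 𝕂 M) [DirectSum.Decomposition ℳ]
    (hact : ∀ (α β : Γ) (a : A) (m : M), a ∈ 𝒜 α → m ∈ ℳ β → a • m ∈ ℳ (α + β))
    {n : ℕ} (μ ν : Fin n → Γ)
    (bμ : Module.Basis (Fin n) A M) (hbμ : ∀ i, bμ i ∈ ℳ (μ i))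
    (bν : Module.Basis (Fin n) A M) (hbν : ∀ i, bν i ∈ ℳ (ν i)) :
    ∃ π : Equiv.Perm (Fin n), ∀ i,
      ∃ a : A, a ∈ 𝒜 (ν (π i) - μ i) ∧ IsUnit a := by
  have proj_smul : ∀ (β γ : Γ) (m : M), m ∈ ℳ β → ∀ (a : A),
      (DirectSum.decompose ℳ (a • m) γ : M) = ((DirectSum.decompose 𝒜 a (γ - β) : A)) • m := by
    intro β γ m hm
    refine DirectSum.Decomposition.inductionOn 𝒜 ?_ ?_ ?_
    · rw [zero_smul]
      simp
    · rintro δ ⟨x, hx⟩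
      have h1 : x • m ∈ ℳ (δ + β) := hact δ β x m hx hm
      by_cases hcase : γ = δ + β
      · rw [hcase, DirectSum.decompose_of_mem_same ℳ h1, add_sub_cancel_right,
          DirectSum.decompose_of_mem_same 𝒜 hx]
      · rw [DirectSum.decompose_of_mem_ne ℳ h1 (fun h => hcase h.symm),
          DirectSum.decompose_of_mem_ne 𝒜 hx (fun h => hcase (by rw [h]; abel)),
          zero_smul]
    · intro a a' ha ha'
      rw [add_smul, DirectSum.decompose_add, DirectSum.add_apply, Submodule.coe_add, ha, ha',
        DirectSum.decompose_add, DirectSum.add_apply, Submodule.coe_add, add_smul]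
  have proj_sum : ∀ (γ : Γ) (f : Fin n → M),
      (DirectSum.decompose ℳ (∑ i, f i) γ : M) = ∑ i, (DirectSum.decompose ℳ (f i) γ : M) := by
    intro γ f
    induction (Finset.univ : Finset (Fin n)) using Finset.cons_induction with
    | empty => simp
    | cons a s ha ihs =>
      rw [Finset.sum_cons, Finset.sum_cons, DirectSum.decompose_add, DirectSum.add_apply,
        Submodule.coe_add, ihs]
  -- homogeneous change of bases matrices
  set Cm : Fin n → Fin n → A :=
    fun i j => (DirectSum.decompose 𝒜 (bμ.repr (bν j) i) (ν j - μ i) : A) with hCdef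
  set Dm : Fin n → Fin n → A :=
    fun j i => (DirectSum.decompose 𝒜 (bν.repr (bμ i) j) (μ i - ν j) : A) with hDdef
  have hCmem : ∀ i j, Cm i j ∈ 𝒜 (ν j - μ i) := fun i j => SetLike.coe_mem _
  have hDmem : ∀ j i, Dm j i ∈ 𝒜 (μ i - ν j) := fun j i => SetLike.coe_mem _
  have hCexp : ∀ j, bν j = ∑ i, Cm i j • bμ i := by
    intro j
    calc bν j = (DirectSum.decompose ℳ (bν j) (ν j) : M) :=
      (DirectSum.decompose_of_mem_same ℳ (hbν j)).symm
    _ = (DirectSum.decompose ℳ (∑ i, bμ.repr (bν j) i • bμ i) (ν j) : M) := by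
      rw [bμ.sum_repr (bν j)]
    _ = ∑ i, (DirectSum.decompose ℳ (bμ.repr (bν j) i • bμ i) (ν j) : M) := proj_sum _ _
    _ = ∑ i, Cm i j • bμ i :=
      Finset.sum_congr rfl (fun i _ => proj_smul (μ i) (ν j) (bμ i) (hbμ i) _)
  have hDexp : ∀ i, bμ i = ∑ j, Dm j i • bν j := by
    intro i
    calc bμ i = (DirectSum.decompose ℳ (bμ i) (μ i) : M) :=
      (DirectSum.decompose_of_mem_same ℳ (hbμ i)).symm
    _ = (DirectSum.decompose ℳ (∑ j, bν.repr (bμ i) j • bν j) (μ i) : M) := by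
      rw [bν.sum_repr (bμ i)]
    _ = ∑ j, (DirectSum.decompose ℳ (bν.repr (bμ i) j • bν j) (μ i) : M) := proj_sum _ _
    _ = ∑ j, Dm j i • bν j :=
      Finset.sum_congr rfl (fun j _ => proj_smul (ν j) (μ i) (bν j) (hbν j) _)
  have hR1 : ∀ j k, ∑ i, Cm i k * Dm j i = if j = k then 1 else 0 := by
    intro j k
    have h1 : bν k = ∑ j' , (∑ i, Cm i k * Dm j' i) • bν j' := by
      calc bν k = ∑ i, Cm i k • bμ i := hCexp k
      _ = ∑ i, Cm i k • (∑ j', Dm j' i • bν j') :=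
        Finset.sum_congr rfl (fun i _ => by rw [← hDexp i])
      _ = ∑ i, ∑ j', (Cm i k * Dm j' i) • bν j' :=
        Finset.sum_congr rfl (fun i _ => by
          rw [Finset.smul_sum]
          exact Finset.sum_congr rfl (fun j' _ => smul_smul _ _ _))
      _ = ∑ j', (∑ i, Cm i k * Dm j' i) • bν j' := by
        rw [Finset.sum_comm]
        exact Finset.sum_congr rfl (fun j' _ => (Finset.sum_smul).symm)
    have h2 := bν.repr_sum_self (fun j' => ∑ i, Cm i k * Dm j' i)
    rw [← h1] at h2
    have h3 := congrFun h2 j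
    rw [Module.Basis.repr_self_apply] at h3
    rw [← h3]
    simp [eq_comm]
  have hR2 : ∀ i k, ∑ j, Dm j i * Cm k j = if i = k then 1 else 0 := by
    intro i k
    have h1 : bμ i = ∑ k', (∑ j, Dm j i * Cm k' j) • bμ k' := by
      calc bμ i = ∑ j, Dm j i • bν j := hDexp i
      _ = ∑ j, Dm j i • (∑ k', Cm k' j • bμ k') :=
        Finset.sum_congr rfl (fun j _ => by rw [← hCexp j])
      _ = ∑ j, ∑ k', (Dm j i * Cm k' j) • bμ k' :=
        Finset.sum_congr rfl (fun j _ => by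
          rw [Finset.smul_sum]
          exact Finset.sum_congr rfl (fun k' _ => smul_smul _ _ _))
      _ = ∑ k', (∑ j, Dm j i * Cm k' j) • bμ k' := by
        rw [Finset.sum_comm]
        exact Finset.sum_congr rfl (fun k' _ => (Finset.sum_smul).symm)
    have h2 := bμ.repr_sum_self (fun k' => ∑ j, Dm j i * Cm k' j)
    rw [← h1] at h2
    have h3 := congrFun h2 k
    rw [Module.Basis.repr_self_apply] at h3
    rw [← h3]
  obtain ⟨π, hπ⟩ := key_matrix 𝒜 hloc n μ ν Cm Dm hCmem hDmem hR1 hR2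
  exact ⟨π, hπ⟩
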